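/- arXiv:1408.2099 — 2 statements merged into one kernel-verified Lean document; each statement's English description precedes it below -/
import Mathlib

section
/- Let F0∈ℝ and let ψ,v∥,ρ be smooth on {R>0}×ℝ_φ×ℝ_Z; set B := ((1/R)∂_Zψ)e_R+(F0/R)e_φ+(−(1/R)∂_Rψ)e_Z and |B|² := (F0²+(∂_Rψ)²+(∂_Zψ)²)/R². Then B·( ρ (v∥B)·∇(v∥B) ) = −(ρ/R)[ψ, v∥²|B|²/2] + ρ(F0/R²)∂_φ( v∥²|B|²/2 ). -/
noncomputable section
set_option linter.unusedVariables false

open Real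

/-- Scalar fields on the cylindrical domain, as functions of `(R, φ, Z)`. -/
abbrev F3 := ℝ → ℝ → ℝ → ℝ

/-- Partial derivative in `R`. -/
def dR (f : F3) (R φ Z : ℝ) : ℝ := deriv (fun r => f r φ Z) R

/-- Partial derivative in `φ`. -/
def dP (f : F3) (R φ Z : ℝ) : ℝ := deriv (fun a => f R a Z) φ

/-- Partial derivative in `Z`. -/
def dZ (f : F3) (R φ Z : ℝ) : ℝ := deriv (fun z => f R φ z) Z

/-- Joint smoothness (C^∞) of a scalar field. -/
def Smooth3 (f : F3) : Prop :=
  ContDiff ℝ (⊤ : ℕ∞) fun q : ℝ × ℝ × ℝ => f q.1 q.2.1 q.2.2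

/-- Poisson bracket `[a,b] = ∂_R a ∂_Z b − ∂_Z a ∂_R b`. -/
def pb (a b : F3) (R φ Z : ℝ) : ℝ :=
  dR a R φ Z * dZ b R φ Z - dZ a R φ Z * dR b R φ Z

/-- Grad–Shafranov operator `Δ* f = R ∂_R((1/R) ∂_R f) + ∂_ZZ f`. -/
def GS (f : F3) (R φ Z : ℝ) : ℝ :=
  R * dR (fun r a z => (1 / r) * dR f r a z) R φ Z + dZ (dZ f) R φ Z

/-- Poloidal Laplacian `Δ_pol f = (1/R) ∂_R(R ∂_R f) + ∂_ZZ f`. -/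
def LapPol (f : F3) (R φ Z : ℝ) : ℝ :=
  (1 / R) * dR (fun r a z => r * dR f r a z) R φ Z + dZ (dZ f) R φ Z

/-- Cylindrical divergence `∇·F = (1/R)∂_R(R F_R) + (1/R)∂_φ F_φ + ∂_Z F_Z`. -/
def divC (FR Fφ FZ : F3) (R φ Z : ℝ) : ℝ :=
  (1 / R) * dR (fun r a z => r * FR r a z) R φ Z + (1 / R) * dP Fφ R φ Z + dZ FZ R φ Z

/-- Scalar advection `X·∇f = X_R ∂_R f + (X_φ/R) ∂_φ f + X_Z ∂_Z f`. -/
def advS (XvR XvP XvZ f : F3) (R φ Z : ℝ) : ℝ :=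
  XvR R φ Z * dR f R φ Z + XvP R φ Z / R * dP f R φ Z + XvZ R φ Z * dZ f R φ Z

/-- `e_R`-component of the vector advection `X·∇Y`. -/
def advVR (XvR XvP XvZ YvR YvP YvZ : F3) (R φ Z : ℝ) : ℝ :=
  advS XvR XvP XvZ YvR R φ Z - XvP R φ Z * YvP R φ Z / R

/-- `e_φ`-component of the vector advection `X·∇Y`. -/
def advVP (XvR XvP XvZ YvR YvP YvZ : F3) (R φ Z : ℝ) : ℝ :=
  advS XvR XvP XvZ YvP R φ Z + XvP R φ Z * YvR R φ Z / R

/-- `e_Z`-component of the vector advection `X·∇Y`. -/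
def advVZ (XvR XvP XvZ YvR YvP YvZ : F3) (R φ Z : ℝ) : ℝ :=
  advS XvR XvP XvZ YvZ R φ Z

/-- `e_R`-component of `B = (1/R)∇ψ×e_φ + (F0/R)e_φ`. -/
def BR (ψ : F3) : F3 := fun R φ Z => (1 / R) * dZ ψ R φ Z

/-- `e_φ`-component of the magnetic field. -/
def BP (F0 : ℝ) : F3 := fun R _ _ => F0 / R

/-- `e_Z`-component of the magnetic field. -/
def BZ (ψ : F3) : F3 := fun R φ Z => -(1 / R) * dR ψ R φ Z

/-- `e_R`-component of `v_pol = −R∇u×e_φ`. -/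
def vR (u : F3) : F3 := fun R φ Z => -R * dZ u R φ Z

/-- `e_Z`-component of `v_pol = −R∇u×e_φ`. -/
def vZ (u : F3) : F3 := fun R φ Z => R * dR u R φ Z

/-- The zero field. -/
def zeroF : F3 := fun _ _ _ => 0

/-- `|B|² = (F0² + (∂_Rψ)² + (∂_Zψ)²)/R²`. -/
def B2 (F0 : ℝ) (ψ : F3) : F3 := fun R φ Z =>
  (F0 ^ 2 + (dR ψ R φ Z) ^ 2 + (dZ ψ R φ Z) ^ 2) / R ^ 2

/-- `|B_pol|² = ((∂_Rψ)² + (∂_Zψ)²)/R²`. -/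
def Bpol2 (ψ : F3) : F3 := fun R φ Z => ((dR ψ R φ Z) ^ 2 + (dZ ψ R φ Z) ^ 2) / R ^ 2

/-- `ρ̂ = R²ρ`. -/
def rh (ρ : F3) : F3 := fun R φ Z => R ^ 2 * ρ R φ Z

/-- `∇_pol a · ∇_pol b`. -/
def gdot (a b : F3) : F3 := fun R φ Z =>
  dR a R φ Z * dR b R φ Z + dZ a R φ Z * dZ b R φ Z

/-- `e_R`-component of `v∥ B`. -/
def XR (ψ vpar : F3) : F3 := fun R φ Z => vpar R φ Z * BR ψ R φ Z

/-- `e_φ`-component of `v∥ B`. -/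
def XP (F0 : ℝ) (vpar : F3) : F3 := fun R φ Z => vpar R φ Z * BP F0 R φ Z

/-- `e_Z`-component of `v∥ B`. -/
def XZ (ψ vpar : F3) : F3 := fun R φ Z => vpar R φ Z * BZ ψ R φ Z

section Helpers

private lemma slice1 (f : F3) (hf : Smooth3 f) (R φ Z : ℝ) :
    HasDerivAt (fun r => f r φ Z)
      (fderiv ℝ (fun q : ℝ × ℝ × ℝ => f q.1 q.2.1 q.2.2) (R, φ, Z) (1, 0, 0)) R := by
  have hF := ((hf.differentiable (by simp)) (R, φ, Z)).hasFDerivAt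
  have h : HasDerivAt (fun r : ℝ => ((r, φ, Z) : ℝ × ℝ × ℝ)) (1, 0, 0) R :=
    (hasDerivAt_id R).prodMk ((hasDerivAt_const R φ).prodMk (hasDerivAt_const R Z))
  exact hF.comp_hasDerivAt R h

private lemma slice2 (f : F3) (hf : Smooth3 f) (R φ Z : ℝ) :
    HasDerivAt (fun a => f R a Z)
      (fderiv ℝ (fun q : ℝ × ℝ × ℝ => f q.1 q.2.1 q.2.2) (R, φ, Z) (0, 1, 0)) φ := by
  have hF := ((hf.differentiable (by simp)) (R, φ, Z)).hasFDerivAt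
  have h : HasDerivAt (fun a : ℝ => ((R, a, Z) : ℝ × ℝ × ℝ)) (0, 1, 0) φ :=
    (hasDerivAt_const φ R).prodMk ((hasDerivAt_id φ).prodMk (hasDerivAt_const φ Z))
  exact hF.comp_hasDerivAt φ h

private lemma slice3 (f : F3) (hf : Smooth3 f) (R φ Z : ℝ) :
    HasDerivAt (fun z => f R φ z)
      (fderiv ℝ (fun q : ℝ × ℝ × ℝ => f q.1 q.2.1 q.2.2) (R, φ, Z) (0, 0, 1)) Z := by
  have hF := ((hf.differentiable (by simp)) (R, φ, Z)).hasFDerivAt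
  have h : HasDerivAt (fun z : ℝ => ((R, φ, z) : ℝ × ℝ × ℝ)) (0, 0, 1) Z :=
    (hasDerivAt_const Z R).prodMk ((hasDerivAt_const Z φ).prodMk (hasDerivAt_id Z))
  exact hF.comp_hasDerivAt Z h

private lemma hdR (f : F3) (hf : Smooth3 f) (R φ Z : ℝ) :
    HasDerivAt (fun r => f r φ Z) (dR f R φ Z) R :=
  (slice1 f hf R φ Z).differentiableAt.hasDerivAt

private lemma hdP (f : F3) (hf : Smooth3 f) (R φ Z : ℝ) :
    HasDerivAt (fun a => f R a Z) (dP f R φ Z) φ :=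
  (slice2 f hf R φ Z).differentiableAt.hasDerivAt

private lemma hdZ (f : F3) (hf : Smooth3 f) (R φ Z : ℝ) :
    HasDerivAt (fun z => f R φ z) (dZ f R φ Z) Z :=
  (slice3 f hf R φ Z).differentiableAt.hasDerivAt

private lemma smooth_dR (f : F3) (hf : Smooth3 f) : Smooth3 (dR f) := by
  have h : ContDiff ℝ (⊤ : ℕ∞)
      (fun q : ℝ × ℝ × ℝ =>
        fderiv ℝ (fun q : ℝ × ℝ × ℝ => f q.1 q.2.1 q.2.2) q (1, 0, 0)) :=
    (hf.fderiv_right (by simp)).clm_apply contDiff_const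
  have he : (fun q : ℝ × ℝ × ℝ => dR f q.1 q.2.1 q.2.2)
      = fun q : ℝ × ℝ × ℝ =>
        fderiv ℝ (fun q : ℝ × ℝ × ℝ => f q.1 q.2.1 q.2.2) q (1, 0, 0) :=
    funext fun q => (slice1 f hf q.1 q.2.1 q.2.2).deriv
  rw [Smooth3, he]; exact h

private lemma smooth_dZ (f : F3) (hf : Smooth3 f) : Smooth3 (dZ f) := by
  have h : ContDiff ℝ (⊤ : ℕ∞)
      (fun q : ℝ × ℝ × ℝ =>
        fderiv ℝ (fun q : ℝ × ℝ × ℝ => f q.1 q.2.1 q.2.2) q (0, 0, 1)) :=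
    (hf.fderiv_right (by simp)).clm_apply contDiff_const
  have he : (fun q : ℝ × ℝ × ℝ => dZ f q.1 q.2.1 q.2.2)
      = fun q : ℝ × ℝ × ℝ =>
        fderiv ℝ (fun q : ℝ × ℝ × ℝ => f q.1 q.2.1 q.2.2) q (0, 0, 1) :=
    funext fun q => (slice3 f hf q.1 q.2.1 q.2.2).deriv
  rw [Smooth3, he]; exact h

end Helpers

/-- `B·(ρ (v∥B)·∇(v∥B)) = −(ρ/R)[ψ, v∥²|B|²/2] + ρ(F0/R²)∂_φ(v∥²|B|²/2)`. -/
theorem B_dot_parallel_advection (F0 : ℝ) (ψ vpar ρ : F3)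
    (hψ : Smooth3 ψ) (hv : Smooth3 vpar) (hρ : Smooth3 ρ) :
    ∀ R φ Z : ℝ, 0 < R →
      BR ψ R φ Z * (ρ R φ Z * advVR (XR ψ vpar) (XP F0 vpar) (XZ ψ vpar)
          (XR ψ vpar) (XP F0 vpar) (XZ ψ vpar) R φ Z)
        + BP F0 R φ Z * (ρ R φ Z * advVP (XR ψ vpar) (XP F0 vpar) (XZ ψ vpar)
          (XR ψ vpar) (XP F0 vpar) (XZ ψ vpar) R φ Z)
        + BZ ψ R φ Z * (ρ R φ Z * advVZ (XR ψ vpar) (XP F0 vpar) (XZ ψ vpar)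
          (XR ψ vpar) (XP F0 vpar) (XZ ψ vpar) R φ Z)
      = -(ρ R φ Z / R) * pb ψ (fun r a z => vpar r a z ^ 2 * B2 F0 ψ r a z / 2) R φ Z
        + ρ R φ Z * (F0 / R ^ 2)
            * dP (fun r a z => vpar r a z ^ 2 * B2 F0 ψ r a z / 2) R φ Z := by
  intro R φ Z hR
  have hR0 : R ≠ 0 := hR.ne'
  have hp : Smooth3 (dR ψ) := smooth_dR ψ hψ
  have hq : Smooth3 (dZ ψ) := smooth_dZ ψ hψ
  -- first derivatives of the fields at the point
  have hvR := hdR vpar hv R φ Z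
  have hvP := hdP vpar hv R φ Z
  have hvZ := hdZ vpar hv R φ Z
  have hpR := hdR (dR ψ) hp R φ Z
  have hpP := hdP (dR ψ) hp R φ Z
  have hpZ := hdZ (dR ψ) hp R φ Z
  have hqR := hdR (dZ ψ) hq R φ Z
  have hqP := hdP (dZ ψ) hq R φ Z
  have hqZ := hdZ (dZ ψ) hq R φ Z
  have h1r : HasDerivAt (fun r : ℝ => 1 / r) (-(R ^ 2)⁻¹) R := by
    simpa [one_div] using hasDerivAt_inv hR0
  -- derivatives of XR
  have e1 : dR (XR ψ vpar) R φ Z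
      = dR vpar R φ Z * (1 / R * dZ ψ R φ Z)
        + vpar R φ Z * (-(R ^ 2)⁻¹ * dZ ψ R φ Z + 1 / R * dR (dZ ψ) R φ Z) :=
    (hvR.mul (h1r.mul hqR)).deriv
  have e2 : dP (XR ψ vpar) R φ Z
      = dP vpar R φ Z * (1 / R * dZ ψ R φ Z) + vpar R φ Z * (1 / R * dP (dZ ψ) R φ Z) :=
    (hvP.mul (hqP.const_mul (1 / R))).deriv
  have e3 : dZ (XR ψ vpar) R φ Z
      = dZ vpar R φ Z * (1 / R * dZ ψ R φ Z) + vpar R φ Z * (1 / R * dZ (dZ ψ) R φ Z) :=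
    (hvZ.mul (hqZ.const_mul (1 / R))).deriv
  -- derivatives of XP
  have hBPr : HasDerivAt (fun r : ℝ => F0 / r) ((0 * R - F0 * 1) / R ^ 2) R :=
    (hasDerivAt_const R F0).div (hasDerivAt_id R) hR0
  have e4 : dR (XP F0 vpar) R φ Z
      = dR vpar R φ Z * (F0 / R) + vpar R φ Z * ((0 * R - F0 * 1) / R ^ 2) :=
    (hvR.mul hBPr).deriv
  have e5 : dP (XP F0 vpar) R φ Z = dP vpar R φ Z * (F0 / R) :=
    (hvP.mul_const (F0 / R)).deriv
  have e6 : dZ (XP F0 vpar) R φ Z = dZ vpar R φ Z * (F0 / R) :=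
    (hvZ.mul_const (F0 / R)).deriv
  -- derivatives of XZ
  have e7 : dR (XZ ψ vpar) R φ Z
      = dR vpar R φ Z * (-(1 / R) * dR ψ R φ Z)
        + vpar R φ Z * (- -(R ^ 2)⁻¹ * dR ψ R φ Z + -(1 / R) * dR (dR ψ) R φ Z) :=
    (hvR.mul (h1r.neg.mul hpR)).deriv
  have e8 : dP (XZ ψ vpar) R φ Z
      = dP vpar R φ Z * (-(1 / R) * dR ψ R φ Z) + vpar R φ Z * (-(1 / R) * dP (dR ψ) R φ Z) :=
    (hvP.mul (hpP.const_mul (-(1 / R)))).deriv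
  have e9 : dZ (XZ ψ vpar) R φ Z
      = dZ vpar R φ Z * (-(1 / R) * dR ψ R φ Z) + vpar R φ Z * (-(1 / R) * dZ (dR ψ) R φ Z) :=
    (hvZ.mul (hpZ.const_mul (-(1 / R)))).deriv
  -- derivatives of g = v² |B|² / 2
  have hv2R : HasDerivAt (fun r => vpar r φ Z ^ 2) (2 * vpar R φ Z * dR vpar R φ Z) R := by
    simpa [mul_comm] using hvR.fun_pow 2
  have hv2P : HasDerivAt (fun a => vpar R a Z ^ 2) (2 * vpar R φ Z * dP vpar R φ Z) φ := by
    simpa [mul_comm] using hvP.fun_pow 2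
  have hv2Z : HasDerivAt (fun z => vpar R φ z ^ 2) (2 * vpar R φ Z * dZ vpar R φ Z) Z := by
    simpa [mul_comm] using hvZ.fun_pow 2
  have hp2R : HasDerivAt (fun r => dR ψ r φ Z ^ 2) (2 * dR ψ R φ Z * dR (dR ψ) R φ Z) R := by
    simpa [mul_comm] using hpR.fun_pow 2
  have hp2P : HasDerivAt (fun a => dR ψ R a Z ^ 2) (2 * dR ψ R φ Z * dP (dR ψ) R φ Z) φ := by
    simpa [mul_comm] using hpP.fun_pow 2
  have hp2Z : HasDerivAt (fun z => dR ψ R φ z ^ 2) (2 * dR ψ R φ Z * dZ (dR ψ) R φ Z) Z := by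
    simpa [mul_comm] using hpZ.fun_pow 2
  have hq2R : HasDerivAt (fun r => dZ ψ r φ Z ^ 2) (2 * dZ ψ R φ Z * dR (dZ ψ) R φ Z) R := by
    simpa [mul_comm] using hqR.fun_pow 2
  have hq2P : HasDerivAt (fun a => dZ ψ R a Z ^ 2) (2 * dZ ψ R φ Z * dP (dZ ψ) R φ Z) φ := by
    simpa [mul_comm] using hqP.fun_pow 2
  have hq2Z : HasDerivAt (fun z => dZ ψ R φ z ^ 2) (2 * dZ ψ R φ Z * dZ (dZ ψ) R φ Z) Z := by
    simpa [mul_comm] using hqZ.fun_pow 2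
  have hden : HasDerivAt (fun r : ℝ => r ^ 2) (2 * R) R := by
    simpa using hasDerivAt_pow 2 R
  have hB2r : HasDerivAt (fun r => B2 F0 ψ r φ Z)
      (((0 + 2 * dR ψ R φ Z * dR (dR ψ) R φ Z + 2 * dZ ψ R φ Z * dR (dZ ψ) R φ Z) * R ^ 2
        - (F0 ^ 2 + dR ψ R φ Z ^ 2 + dZ ψ R φ Z ^ 2) * (2 * R)) / (R ^ 2) ^ 2) R :=
    (((hasDerivAt_const R (F0 ^ 2)).add hp2R).add hq2R).div hden (pow_ne_zero 2 hR0)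
  have hB2p : HasDerivAt (fun a => B2 F0 ψ R a Z)
      ((0 + 2 * dR ψ R φ Z * dP (dR ψ) R φ Z + 2 * dZ ψ R φ Z * dP (dZ ψ) R φ Z) / R ^ 2) φ :=
    ((((hasDerivAt_const φ (F0 ^ 2)).add hp2P).add hq2P).div_const (R ^ 2))
  have hB2z : HasDerivAt (fun z => B2 F0 ψ R φ z)
      ((0 + 2 * dR ψ R φ Z * dZ (dR ψ) R φ Z + 2 * dZ ψ R φ Z * dZ (dZ ψ) R φ Z) / R ^ 2) Z :=
    ((((hasDerivAt_const Z (F0 ^ 2)).add hp2Z).add hq2Z).div_const (R ^ 2))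
  have e10 : dR (fun r a z => vpar r a z ^ 2 * B2 F0 ψ r a z / 2) R φ Z
      = (2 * vpar R φ Z * dR vpar R φ Z * B2 F0 ψ R φ Z
        + vpar R φ Z ^ 2
          * (((0 + 2 * dR ψ R φ Z * dR (dR ψ) R φ Z + 2 * dZ ψ R φ Z * dR (dZ ψ) R φ Z) * R ^ 2
            - (F0 ^ 2 + dR ψ R φ Z ^ 2 + dZ ψ R φ Z ^ 2) * (2 * R)) / (R ^ 2) ^ 2)) / 2 :=
    ((hv2R.mul hB2r).div_const 2).deriv
  have e11 : dP (fun r a z => vpar r a z ^ 2 * B2 F0 ψ r a z / 2) R φ Z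
      = (2 * vpar R φ Z * dP vpar R φ Z * B2 F0 ψ R φ Z
        + vpar R φ Z ^ 2
          * ((0 + 2 * dR ψ R φ Z * dP (dR ψ) R φ Z + 2 * dZ ψ R φ Z * dP (dZ ψ) R φ Z) / R ^ 2)) / 2 :=
    ((hv2P.mul hB2p).div_const 2).deriv
  have e12 : dZ (fun r a z => vpar r a z ^ 2 * B2 F0 ψ r a z / 2) R φ Z
      = (2 * vpar R φ Z * dZ vpar R φ Z * B2 F0 ψ R φ Z
        + vpar R φ Z ^ 2
          * ((0 + 2 * dR ψ R φ Z * dZ (dR ψ) R φ Z + 2 * dZ ψ R φ Z * dZ (dZ ψ) R φ Z) / R ^ 2)) / 2 :=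
    ((hv2Z.mul hB2z).div_const 2).deriv
  simp only [advVR, advVP, advVZ, advS, pb]
  rw [e1, e2, e3, e4, e5, e6, e7, e8, e9, e10, e11, e12]
  simp only [XR, XP, XZ, BR, BP, BZ, B2]
  field_simp
  ring
end
end

section
/- Let F0∈ℝ and let ψ,u,ρ be smooth on {R>0}×ℝ_φ×ℝ_Z; set B := ((1/R)∂_Zψ)e_R+(F0/R)e_φ+(−(1/R)∂_Rψ)e_Z, v_pol := (−R∂_Zu)e_R+(R∂_Ru)e_Z, and w := Δ_pol u. Then B·( ρ (v_pol·∇v_pol) ) = (1/(2R)) ρ [R²|∇_pol u|², ψ] + ρRw[ψ,u], where |∇_pol u|² := (∂_Ru)²+(∂_Zu)². -/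
noncomputable section
set_option linter.unusedVariables false

open Real

section Helpers

lemma smooth3_diffR {f : F3} (hf : Smooth3 f) (R φ Z : ℝ) :
    DifferentiableAt ℝ (fun r => f r φ Z) R := by
  have hF := (hf.differentiable (by simp)) (R, φ, Z)
  have hγ : DifferentiableAt ℝ (fun r : ℝ => (r, φ, Z)) R := (differentiableAt_id.prodMk
    ((differentiableAt_const φ).prodMk (differentiableAt_const Z)))
  exact hF.comp R hγ

lemma smooth3_diffZ {f : F3} (hf : Smooth3 f) (R φ Z : ℝ) :
    DifferentiableAt ℝ (fun z => f R φ z) Z := by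
  have hF := (hf.differentiable (by simp)) (R, φ, Z)
  have hγ : DifferentiableAt ℝ (fun z : ℝ => (R, φ, z)) Z := ((differentiableAt_const R).prodMk
    ((differentiableAt_const φ).prodMk differentiableAt_id))
  have h2 := hF.comp Z hγ
  exact h2

lemma hasDerivAt_dR {f : F3} (hf : Smooth3 f) (R φ Z : ℝ) :
    HasDerivAt (fun r => f r φ Z) (dR f R φ Z) R :=
  (smooth3_diffR hf R φ Z).hasDerivAt

lemma hasDerivAt_dZ {f : F3} (hf : Smooth3 f) (R φ Z : ℝ) :
    HasDerivAt (fun z => f R φ z) (dZ f R φ Z) Z :=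
  (smooth3_diffZ hf R φ Z).hasDerivAt

lemma dR_eq_fderiv {f : F3} (hf : Smooth3 f) (R φ Z : ℝ) :
    dR f R φ Z
      = fderiv ℝ (fun q : ℝ × ℝ × ℝ => f q.1 q.2.1 q.2.2) (R, φ, Z) (1, 0, 0) := by
  have hγ : HasDerivAt (fun r : ℝ => (r, φ, Z)) ((1 : ℝ), (0 : ℝ), (0 : ℝ)) R :=
    (hasDerivAt_id R).prodMk ((hasDerivAt_const R φ).prodMk (hasDerivAt_const R Z))
  have hF := ((hf.differentiable (by simp)) (R, φ, Z)).hasFDerivAt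
  have h := hF.comp_hasDerivAt R hγ
  exact h.deriv

lemma dZ_eq_fderiv {f : F3} (hf : Smooth3 f) (R φ Z : ℝ) :
    dZ f R φ Z
      = fderiv ℝ (fun q : ℝ × ℝ × ℝ => f q.1 q.2.1 q.2.2) (R, φ, Z) (0, 0, 1) := by
  have hγ : HasDerivAt (fun z : ℝ => (R, φ, z)) ((0 : ℝ), (0 : ℝ), (1 : ℝ)) Z :=
    (hasDerivAt_const Z R).prodMk ((hasDerivAt_const Z φ).prodMk (hasDerivAt_id Z))
  have hF := ((hf.differentiable (by simp)) (R, φ, Z)).hasFDerivAt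
  have h := hF.comp_hasDerivAt Z hγ
  exact h.deriv

lemma smooth3_fderiv_apply {f : F3} (hf : Smooth3 f) (v : ℝ × ℝ × ℝ) :
    ContDiff ℝ (⊤ : ℕ∞)
      (fun q : ℝ × ℝ × ℝ => fderiv ℝ (fun q : ℝ × ℝ × ℝ => f q.1 q.2.1 q.2.2) q v) := by
  have hfd := (contDiff_infty_iff_fderiv.mp hf).2
  exact hfd.clm_apply contDiff_const

lemma smooth3_dR {f : F3} (hf : Smooth3 f) : Smooth3 (dR f) := by
  have h := smooth3_fderiv_apply hf (1, 0, 0)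
  unfold Smooth3
  have : (fun q : ℝ × ℝ × ℝ => dR f q.1 q.2.1 q.2.2)
      = fun q : ℝ × ℝ × ℝ =>
        fderiv ℝ (fun q : ℝ × ℝ × ℝ => f q.1 q.2.1 q.2.2) q (1, 0, 0) := by
    funext q
    exact dR_eq_fderiv hf q.1 q.2.1 q.2.2
  rw [this]; exact h

lemma smooth3_dZ {f : F3} (hf : Smooth3 f) : Smooth3 (dZ f) := by
  have h := smooth3_fderiv_apply hf (0, 0, 1)
  unfold Smooth3
  have : (fun q : ℝ × ℝ × ℝ => dZ f q.1 q.2.1 q.2.2)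
      = fun q : ℝ × ℝ × ℝ =>
        fderiv ℝ (fun q : ℝ × ℝ × ℝ => f q.1 q.2.1 q.2.2) q (0, 0, 1) := by
    funext q
    exact dZ_eq_fderiv hf q.1 q.2.1 q.2.2
  rw [this]; exact h

end Helpers

/-- `B·(ρ (v_pol·∇v_pol)) = (1/(2R))ρ[R²|∇_pol u|², ψ] + ρRw[ψ,u]`. -/
theorem B_dot_poloidal_advection (F0 : ℝ) (ψ u ρ : F3)
    (hψ : Smooth3 ψ) (hu : Smooth3 u) (hρ : Smooth3 ρ) :
    ∀ R φ Z : ℝ, 0 < R →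
      BR ψ R φ Z * (ρ R φ Z * advVR (vR u) zeroF (vZ u) (vR u) zeroF (vZ u) R φ Z)
        + BP F0 R φ Z * (ρ R φ Z * advVP (vR u) zeroF (vZ u) (vR u) zeroF (vZ u) R φ Z)
        + BZ ψ R φ Z * (ρ R φ Z * advVZ (vR u) zeroF (vZ u) (vR u) zeroF (vZ u) R φ Z)
      = (1 / (2 * R)) * ρ R φ Z * pb (fun r a z => r ^ 2 * gdot u u r a z) ψ R φ Z
        + ρ R φ Z * R * LapPol u R φ Z * pb ψ u R φ Z := by
  intro R φ Z hR
  have hpR := hasDerivAt_dR (smooth3_dR hu) R φ Z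
  have hpZ := hasDerivAt_dZ (smooth3_dR hu) R φ Z
  have hqR := hasDerivAt_dR (smooth3_dZ hu) R φ Z
  have hqZ := hasDerivAt_dZ (smooth3_dZ hu) R φ Z
  -- derivatives of v_pol components
  have E1 : dR (vR u) R φ Z
      = -1 * dZ u R φ Z + -R * dR (dZ u) R φ Z := by
    have h := ((hasDerivAt_id R).neg.mul hqR)
    simpa [dR, vR, Pi.mul_def] using h.deriv
  have E2 : dZ (vR u) R φ Z = -R * dZ (dZ u) R φ Z := by
    have h := hqZ.const_mul (-R)
    simpa [dZ, vR] using h.deriv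
  have E3 : dR (vZ u) R φ Z
      = 1 * dR u R φ Z + R * dR (dR u) R φ Z := by
    have h := ((hasDerivAt_id R).mul hpR)
    simpa [dR, vZ, Pi.mul_def] using h.deriv
  have E4 : dZ (vZ u) R φ Z = R * dZ (dR u) R φ Z := by
    have h := hpZ.const_mul R
    simpa [dZ, vZ] using h.deriv
  -- Laplacian inner derivative
  have E5 : dR (fun r a z => r * dR u r a z) R φ Z
      = 1 * dR u R φ Z + R * dR (dR u) R φ Z := by
    have h := ((hasDerivAt_id R).mul hpR)
    simpa [dR, Pi.mul_def] using h.deriv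
  -- bracket with R² |∇u|²
  have E6 : dR (fun r a z => r ^ 2 * gdot u u r a z) R φ Z
      = (↑2 * R ^ 1) * (dR u R φ Z * dR u R φ Z + dZ u R φ Z * dZ u R φ Z)
        + R ^ 2 * ((dR (dR u) R φ Z * dR u R φ Z + dR u R φ Z * dR (dR u) R φ Z)
          + (dR (dZ u) R φ Z * dZ u R φ Z + dZ u R φ Z * dR (dZ u) R φ Z)) := by
    have h := (hasDerivAt_pow 2 R).mul ((hpR.mul hpR).add (hqR.mul hqR))
    simpa [dR, gdot, Pi.mul_def, Pi.add_def] using h.deriv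
  have E7 : dZ (fun r a z => r ^ 2 * gdot u u r a z) R φ Z
      = R ^ 2 * ((dZ (dR u) R φ Z * dR u R φ Z + dR u R φ Z * dZ (dR u) R φ Z)
          + (dZ (dZ u) R φ Z * dZ u R φ Z + dZ u R φ Z * dZ (dZ u) R φ Z)) := by
    have h := ((hpZ.mul hpZ).add (hqZ.mul hqZ)).const_mul (R ^ 2)
    simpa [dZ, gdot] using h.deriv
  have Ez1 : dR zeroF R φ Z = 0 := by simp [dR, zeroF]
  have Ez2 : dP zeroF R φ Z = 0 := by simp [dP, zeroF]
  have Ez3 : dZ zeroF R φ Z = 0 := by simp [dZ, zeroF]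
  simp only [advVR, advVP, advVZ, advS, BR, BP, BZ, vR, vZ, zeroF, pb, LapPol,
    E1, E2, E3, E4, E5, E6, E7, Ez1, Ez2, Ez3]
  field_simp
  ring
end
end
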